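/- (Proposition 1.3, joint convexity) Fix m > 0 and γ̇ > 0, and let 0 < qa ≤ qb satisfy qa² ≥ g3(γ̇) and qb·√(γ̇²+2γ̇) ≤ √m·(1+γ̇)·ln(1+γ̇). Let N₁, N₂ ≥ 0, let q₁, q₂ ∈ [qa, qb], let λ ∈ [0,1], and let q ∈ [qa, qb] satisfy Q(q) = λ·Q(q₁) + (1−λ)·Q(q₂). Then Φ(λ·N₁ + (1−λ)·N₂, q) ≤ λ·Φ(N₁, q₁) + (1−λ)·Φ(N₂, q₂), where Φ(N, q) = exp((N·ln2/m + μ(γ̇)·q/√m)/(1 − ρ(γ̇)·q/√m)) − 1; that is, the EAR function is jointly convex with respect to the packet size N and the block error rate ε. -/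

import Mathlib

open MeasureTheory

/-- The Gaussian Q-function Q(x) = (1/√(2π))·∫ₓ^∞ exp(−t²/2) dt. -/
noncomputable def Qfun (x : ℝ) : ℝ :=
  (Real.sqrt (2 * Real.pi))⁻¹ * ∫ t in Set.Ioi x, Real.exp (-t ^ 2 / 2)

/-- ρ(γ) = 1/((1+γ)·√(γ²+2γ)) -/
noncomputable def rho (γ : ℝ) : ℝ := 1 / ((1 + γ) * Real.sqrt (γ ^ 2 + 2 * γ))

/-- μ(γ) = √(γ²+2γ)/(1+γ) − ln(1+γ)/((1+γ)·√(γ²+2γ)) -/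
noncomputable def mu (γ : ℝ) : ℝ :=
  Real.sqrt (γ ^ 2 + 2 * γ) / (1 + γ) -
    Real.log (1 + γ) / ((1 + γ) * Real.sqrt (γ ^ 2 + 2 * γ))

/-- g₃(γ) = ln(1+γ)/((γ²+2γ)·((γ²+2γ) − ln(1+γ))). -/
noncomputable def g3 (γ : ℝ) : ℝ :=
  Real.log (1 + γ) / ((γ ^ 2 + 2 * γ) * ((γ ^ 2 + 2 * γ) - Real.log (1 + γ)))

/-- The EAR function Φ(N,q) with parameters m and recursion point γ̇. -/
noncomputable def Phi (m γ' N q : ℝ) : ℝ :=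
  Real.exp ((N * Real.log 2 / m + mu γ' * q / Real.sqrt m) /
    (1 - rho γ' * q / Real.sqrt m)) - 1


/- ======================= auxiliary machinery ======================= -/

/-- The Gaussian kernel. -/
noncomputable def gauss (x : ℝ) : ℝ := Real.exp (-x ^ 2 / 2)

/-- The (normalized) Gaussian density. -/
noncomputable def phi (x : ℝ) : ℝ := (Real.sqrt (2 * Real.pi))⁻¹ * gauss x

lemma phi_pos (x : ℝ) : 0 < phi x := by
  have : 0 < Real.sqrt (2 * Real.pi) := Real.sqrt_pos.2 (by positivity)
  exact mul_pos (inv_pos.2 this) (Real.exp_pos _)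

lemma gauss_cont : Continuous gauss := by
  unfold gauss; continuity

lemma gauss_int : Integrable gauss := by
  have h := integrable_exp_neg_mul_sq (b := (1:ℝ)/2) (by norm_num)
  have : (fun x : ℝ => Real.exp (-(1/2) * x ^ 2)) = gauss := by
    funext x; unfold gauss; ring_nf
  rwa [this] at h

lemma phi_hasDerivAt (x : ℝ) : HasDerivAt phi (-x * phi x) x := by
  have h1 : HasDerivAt (fun y : ℝ => -y ^ 2 / 2) (-x) x := by
    have := (hasDerivAt_pow 2 x).neg.div_const 2
    refine this.congr_deriv ?_
    push_cast
    ring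
  have h2 := (h1.exp).const_mul (Real.sqrt (2 * Real.pi))⁻¹
  refine h2.congr_deriv ?_
  unfold phi gauss
  ring

lemma Qfun_hasDerivAt (x : ℝ) : HasDerivAt Qfun (-phi x) x := by
  have hiic : ∀ a : ℝ, IntegrableOn gauss (Set.Iic a) := fun a => gauss_int.integrableOn
  have hioi : ∀ a : ℝ, IntegrableOn gauss (Set.Ioi a) := fun a => gauss_int.integrableOn
  have hQ_eq : Qfun = fun y =>
      (Real.sqrt (2 * Real.pi))⁻¹ * ((∫ t in Set.Ioi (0:ℝ), gauss t) - ∫ t in (0:ℝ)..y, gauss t) := by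
    funext y
    unfold Qfun
    have h1 : ∫ t in (0:ℝ)..y, gauss t
        = (∫ t in Set.Iic y, gauss t) - ∫ t in Set.Iic 0, gauss t :=
      (intervalIntegral.integral_Iic_sub_Iic (hiic 0) (hiic y)).symm
    have h2 : (∫ t in Set.Iic y, gauss t) + ∫ t in Set.Ioi y, gauss t = ∫ t, gauss t :=
      intervalIntegral.integral_Iic_add_Ioi (hiic y) (hioi y)
    have h3 : (∫ t in Set.Iic 0, gauss t) + ∫ t in Set.Ioi 0, gauss t = ∫ t, gauss t :=
      intervalIntegral.integral_Iic_add_Ioi (hiic 0) (hioi 0)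
    have h4 : ∫ t in Set.Ioi y, gauss t
        = (∫ t in Set.Ioi (0:ℝ), gauss t) - ∫ t in (0:ℝ)..y, gauss t := by
      rw [h1]; linarith
    rw [show (fun t : ℝ => Real.exp (-t ^ 2 / 2)) = gauss from rfl] at *
    rw [h4]
  rw [hQ_eq]
  have hftc : HasDerivAt (fun y => ∫ t in (0:ℝ)..y, gauss t) (gauss x) x :=
    intervalIntegral.integral_hasDerivAt_right gauss_int.intervalIntegrable
      gauss_cont.stronglyMeasurable.stronglyMeasurableAtFilter gauss_cont.continuousAt
  have := (hftc.const_sub (∫ t in Set.Ioi (0:ℝ), gauss t)).const_mul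
      (Real.sqrt (2 * Real.pi))⁻¹
  refine this.congr_deriv ?_
  unfold phi
  ring

lemma Qfun_strictAnti : StrictAnti Qfun := by
  apply strictAnti_of_deriv_neg
  intro x
  rw [(Qfun_hasDerivAt x).deriv]
  have := phi_pos x
  linarith

lemma Qfun_cont : Continuous Qfun :=
  continuous_iff_continuousAt.2 fun x => (Qfun_hasDerivAt x).continuousAt

/-- The inverse of the Gaussian Q-function. -/
noncomputable def Vfun : ℝ → ℝ := Function.invFun Qfun

lemma Vfun_left (x : ℝ) : Vfun (Qfun x) = x :=
  Function.leftInverse_invFun Qfun_strictAnti.injective x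

section
variable {a' b' : ℝ}

lemma Qfun_right {y : ℝ} (hy : y ∈ Set.Ioo (Qfun b') (Qfun a')) :
    Qfun (Vfun y) = y := by
  have hab : a' ≤ b' := by
    by_contra h
    push_neg at h
    have := Qfun_strictAnti h
    exact absurd (hy.1.trans hy.2) (by linarith)
  obtain ⟨x, _, hx⟩ := intermediate_value_Ioo' hab Qfun_cont.continuousOn hy
  exact Function.invFun_eq ⟨x, hx⟩

lemma Vfun_mem {y : ℝ} (hy : y ∈ Set.Ioo (Qfun b') (Qfun a')) :
    Vfun y ∈ Set.Ioo a' b' := by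
  have h := Qfun_right hy
  constructor
  · exact Qfun_strictAnti.lt_iff_gt.1 (by rw [h]; exact hy.2)
  · exact Qfun_strictAnti.lt_iff_gt.1 (by rw [h]; exact hy.1)

lemma Vfun_contAt {y : ℝ} (hy : y ∈ Set.Ioo (Qfun b') (Qfun a')) :
    ContinuousAt Vfun y := by
  set U := Set.Ioo (Qfun b') (Qfun a') with hU
  have hanti : ∀ ⦃z⦄, z ∈ U → ∀ ⦃z'⦄, z' ∈ U → z < z' → Vfun z' < Vfun z := by
    intro z hz z' hz' hlt
    have h1 := Qfun_right hz
    have h2 := Qfun_right hz'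
    exact Qfun_strictAnti.lt_iff_gt.1 (by rw [h1, h2]; exact hlt)
  have hmono : StrictMonoOn (fun z => -Vfun z) U := fun z hz z' hz' hlt =>
    neg_lt_neg (hanti hz hz' hlt)
  have himg : (fun z => -Vfun z) '' U ∈ nhds (-Vfun y) := by
    have hsub : Set.Ioo (-b') (-a') ⊆ (fun z => -Vfun z) '' U := by
      rintro w ⟨hw1, hw2⟩
      refine ⟨Qfun (-w), ?_, ?_⟩
      · constructor
        · exact Qfun_strictAnti (by linarith)
        · exact Qfun_strictAnti (by linarith)
      · show -Vfun (Qfun (-w)) = w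
        rw [Vfun_left]; ring
    have hyio := Vfun_mem hy
    exact Filter.mem_of_superset (Ioo_mem_nhds (by linarith [hyio.2]) (by linarith [hyio.1])) hsub
  have hcont : ContinuousAt (fun z => -Vfun z) y :=
    hmono.continuousAt_of_image_mem_nhds (isOpen_Ioo.mem_nhds hy) himg
  have := hcont.neg
  simpa only [Pi.neg_def, neg_neg] using this

lemma Vfun_hasDerivAt {y : ℝ} (hy : y ∈ Set.Ioo (Qfun b') (Qfun a')) :
    HasDerivAt Vfun (-phi (Vfun y))⁻¹ y := by
  refine HasDerivAt.of_local_left_inverse (Vfun_contAt hy) (Qfun_hasDerivAt (Vfun y)) ?_ ?_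
  · have := phi_pos (Vfun y); intro h; rw [neg_eq_zero] at h; linarith
  · filter_upwards [isOpen_Ioo.mem_nhds hy] with z hz
    exact Qfun_right hz

end

/-- The key algebraic sum-of-squares inequality for the second derivative. -/
lemma sos_key (A B C dN n vv w1 : ℝ) (hD : 0 < 1 - C * vv) (hn : 0 ≤ n) (hv : 0 ≤ vv)
    (hvB : C ^ 2 ≤ vv * B) (hA : 0 ≤ A) (hC : 0 ≤ C) :
    0 ≤ (A * dN * (1 - C * vv) + w1 * (C * (1 - C * vv) + (B + A * C * n))) ^ 2
      + w1 ^ 2 * (1 - C * vv) ^ 2 * (vv * (B + A * C * n) - C ^ 2) := by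
  have h1 : 0 ≤ vv * (B + A * C * n) - C ^ 2 := by
    nlinarith [mul_nonneg (mul_nonneg hA hC) hn]
  have h2 : (0:ℝ) ≤ w1 ^ 2 * (1 - C * vv) ^ 2 := by positivity
  nlinarith [sq_nonneg (A * dN * (1 - C * vv) + w1 * (C * (1 - C * vv) + (B + A * C * n))),
    mul_nonneg h2 h1]

/-- The key numeric bounds on the domain. -/
lemma key_bounds (x r s L sqm g1 C : ℝ) (hr : 0 < r) (hs : 0 < s) (hL : 0 < L)
    (hLs : L < s) (hsqm : 0 < sqm) (h1γ : 0 < g1) (hr2 : r * r = s)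
    (hC_eq : C = 1 / (g1 * r * sqm)) (hx0 : 0 < x)
    (hxr : x * r ≤ sqm * g1 * L) (hg3x : L ≤ x ^ 2 * (s * (s - L))) :
    C * x < 1 ∧ C ≤ x * (s - L) := by
  constructor
  · rw [hC_eq, div_mul_eq_mul_div, div_lt_one (by positivity)]
    have h3 : sqm * g1 * L < sqm * g1 * (r * r) := by
      rw [hr2]; nlinarith [mul_pos hsqm h1γ]
    exact (mul_lt_mul_iff_of_pos_right hr).1 (by nlinarith)
  · rw [hC_eq, div_le_iff₀ (by positivity)]
    have hX1 : L * (g1 * r * sqm) ≤ x ^ 2 * (s * (s - L)) * (g1 * r * sqm) :=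
      mul_le_mul_of_nonneg_right hg3x (by positivity)
    have hxrr : x * (r * r) = x * s := by rw [hr2]
    have h5 := mul_le_mul_of_nonneg_right hxr hr.le
    have hxs : x * s ≤ L * (g1 * r * sqm) := by nlinarith [h5, hxrr]
    nlinarith [hX1, hxs, mul_pos hx0 hs]

/- ======================= main theorem ======================= -/

set_option maxHeartbeats 1600000 in
/-- The EAR function is jointly convex w.r.t. the packet size N and the BLER ε. -/
theorem stmt_14 (m γ' qa qb N₁ N₂ q₁ q₂ q lam : ℝ)
    (hm : 0 < m) (hγ' : 0 < γ')
    (hqa : 0 < qa) (hqab : qa ≤ qb)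
    (hqa2 : g3 γ' ≤ qa ^ 2)
    (hqb : qb * Real.sqrt (γ' ^ 2 + 2 * γ') ≤ Real.sqrt m * (1 + γ') * Real.log (1 + γ'))
    (hN₁ : 0 ≤ N₁) (hN₂ : 0 ≤ N₂)
    (hq₁ : q₁ ∈ Set.Icc qa qb) (hq₂ : q₂ ∈ Set.Icc qa qb)
    (hlam₀ : 0 ≤ lam) (hlam₁ : lam ≤ 1)
    (hq : q ∈ Set.Icc qa qb)
    (hQ : Qfun q = lam * Qfun q₁ + (1 - lam) * Qfun q₂) :
    Phi m γ' (lam * N₁ + (1 - lam) * N₂) q ≤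
      lam * Phi m γ' N₁ q₁ + (1 - lam) * Phi m γ' N₂ q₂ := by
  -- basic constants
  set s : ℝ := γ' ^ 2 + 2 * γ' with hs_def
  have hs : 0 < s := by positivity
  set r : ℝ := Real.sqrt s with hr_def
  have hr : 0 < r := Real.sqrt_pos.2 hs
  have hr2 : r * r = s := Real.mul_self_sqrt hs.le
  set L : ℝ := Real.log (1 + γ') with hL_def
  have h1γ : (0:ℝ) < 1 + γ' := by linarith
  have hL : 0 < L := Real.log_pos (by linarith)
  have hLs : L < s := by
    have hlog := Real.log_lt_sub_one_of_pos h1γ ((by linarith : (1:ℝ) < 1 + γ').ne')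
    have hLγ : L < γ' := by rw [hL_def]; linarith
    nlinarith
  set sqm : ℝ := Real.sqrt m with hsqm_def
  have hsqm : 0 < sqm := Real.sqrt_pos.2 hm
  have hsqm2 : sqm * sqm = m := Real.mul_self_sqrt hm.le
  have hrho_eq : rho γ' = 1 / ((1 + γ') * r) := rfl
  have hrho_pos : 0 < rho γ' := by rw [hrho_eq]; positivity
  have hmu_eq : mu γ' = rho γ' * (s - L) := by
    rw [hrho_eq]
    show r / (1 + γ') - L / ((1 + γ') * r) = _
    field_simp
    rw [← hr2]; ring
  set A : ℝ := Real.log 2 / m with hA_def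
  have hA : 0 < A := by
    have := Real.log_pos (by norm_num : (1:ℝ) < 2)
    positivity
  set B : ℝ := mu γ' / sqm with hB_def
  set C : ℝ := rho γ' / sqm with hC_def
  have hC : 0 < C := by positivity
  have hBC : B = C * (s - L) := by rw [hB_def, hC_def, hmu_eq]; ring
  have hB : 0 < B := by rw [hBC]; have : 0 < s - L := by linarith
                        positivity
  have hC_eq : C = 1 / ((1 + γ') * r * sqm) := by
    rw [hC_def, hrho_eq]; field_simp
  have hg3_eq : g3 γ' = L / (s * (s - L)) := rfl
  clear_value s r L sqm A B C
  -- key domain bounds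
  have hkey : ∀ x ∈ Set.Icc qa qb, 0 < 1 - C * x ∧ C ^ 2 ≤ x * B := by
    rintro x ⟨hx1, hx2⟩
    have hx0 : 0 < x := lt_of_lt_of_le hqa hx1
    have hxr : x * r ≤ sqm * (1 + γ') * L := by
      have h1 : x * r ≤ qb * r := mul_le_mul_of_nonneg_right hx2 hr.le
      linarith
    have hg3x : L ≤ x ^ 2 * (s * (s - L)) := by
      have h0 : 0 < s * (s - L) := mul_pos hs (by linarith)
      have h1 : L / (s * (s - L)) ≤ qa ^ 2 := hg3_eq ▸ hqa2
      have h2 : L ≤ qa ^ 2 * (s * (s - L)) := (div_le_iff₀ h0).1 h1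
      have hq2x : qa ^ 2 * (s * (s - L)) ≤ x ^ 2 * (s * (s - L)) := by
        have : qa ^ 2 ≤ x ^ 2 := by nlinarith
        exact mul_le_mul_of_nonneg_right this h0.le
      linarith
    obtain ⟨hc1, hc2⟩ := key_bounds x r s L sqm (1 + γ') C hr hs hL hLs hsqm h1γ hr2 hC_eq hx0 hxr hg3x
    refine ⟨by linarith, ?_⟩
    calc C ^ 2 = C * C := sq C
      _ ≤ (x * (s - L)) * C := mul_le_mul_of_nonneg_right hc2 hC.le
      _ = x * (C * (s - L)) := by ring
      _ = x * B := by rw [hBC]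
  obtain ⟨hq₁a, hq₁b⟩ := hq₁
  obtain ⟨hq₂a, hq₂b⟩ := hq₂
  obtain ⟨hqa', hqb'⟩ := hq
  -- the inverse of Qfun on a window
  set a' : ℝ := qa - 1 with ha'_def
  set b' : ℝ := qb + 1 with hb'_def
  set U : Set ℝ := Set.Ioo (Qfun b') (Qfun a') with hU_def
  have hU_open : IsOpen U := isOpen_Ioo
  have hIccU : Set.Icc (Qfun qb) (Qfun qa) ⊆ U := by
    rintro y ⟨hy1, hy2⟩
    exact ⟨lt_of_lt_of_le (Qfun_strictAnti (by rw [hb'_def]; linarith)) hy1,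
      lt_of_le_of_lt hy2 (Qfun_strictAnti (by rw [ha'_def]; linarith))⟩
  set ε₁ : ℝ := Qfun q₁ with hε₁_def
  set ε₂ : ℝ := Qfun q₂ with hε₂_def
  have hε₁I : ε₁ ∈ Set.Icc (Qfun qb) (Qfun qa) :=
    ⟨Qfun_strictAnti.antitone hq₁b, Qfun_strictAnti.antitone hq₁a⟩
  have hε₂I : ε₂ ∈ Set.Icc (Qfun qb) (Qfun qa) :=
    ⟨Qfun_strictAnti.antitone hq₂b, Qfun_strictAnti.antitone hq₂a⟩
  set e : ℝ → ℝ := fun t => t * ε₁ + (1 - t) * ε₂ with he_def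
  have he_mem : ∀ t ∈ Set.Icc (0:ℝ) 1, e t ∈ Set.Icc (Qfun qb) (Qfun qa) := by
    rintro t ⟨ht0, ht1⟩
    constructor
    · have h1 := mul_le_mul_of_nonneg_left hε₁I.1 ht0
      have h2 := mul_le_mul_of_nonneg_left hε₂I.1 (by linarith : (0:ℝ) ≤ 1 - t)
      show Qfun qb ≤ t * ε₁ + (1 - t) * ε₂
      linarith [h1, h2]
    · have h1 := mul_le_mul_of_nonneg_left hε₁I.2 ht0
      have h2 := mul_le_mul_of_nonneg_left hε₂I.2 (by linarith : (0:ℝ) ≤ 1 - t)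
      show t * ε₁ + (1 - t) * ε₂ ≤ Qfun qa
      linarith [h1, h2]
  have he_cont : Continuous e :=
    ((continuous_id.mul continuous_const).add ((continuous_const.sub continuous_id).mul continuous_const))
  have he_deriv : ∀ t : ℝ, HasDerivAt e (ε₁ - ε₂) t := by
    intro t
    have h1 := ((hasDerivAt_id t).mul_const ε₁).add
      (((hasDerivAt_const t (1:ℝ)).sub (hasDerivAt_id t)).mul_const ε₂)
    refine h1.congr_deriv ?_
    ring
  set v : ℝ → ℝ := fun t => Vfun (e t) with hv_def
  set S : Set ℝ := e ⁻¹' U with hS_def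
  have hS_open : IsOpen S := hU_open.preimage he_cont
  have hIccS : Set.Icc (0:ℝ) 1 ⊆ S := fun t ht => hIccU (he_mem t ht)
  have hQv : ∀ t ∈ S, Qfun (v t) = e t := fun t ht => Qfun_right ht
  have hv_mem : ∀ t ∈ Set.Icc (0:ℝ) 1, v t ∈ Set.Icc qa qb := by
    intro t ht
    have h1 := hQv t (hIccS ht)
    have h2 := he_mem t ht
    constructor
    · exact Qfun_strictAnti.le_iff_ge.1 (by rw [h1]; exact h2.2)
    · exact Qfun_strictAnti.le_iff_ge.1 (by rw [h1]; exact h2.1)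
  set w1 : ℝ → ℝ := fun t => (-phi (v t))⁻¹ * (ε₁ - ε₂) with hw1_def
  have hv_deriv : ∀ t ∈ S, HasDerivAt v (w1 t) t := by
    intro t ht
    exact (Vfun_hasDerivAt ht).comp t (he_deriv t)
  have hw1_deriv : ∀ t ∈ S, HasDerivAt w1 (v t * w1 t ^ 2) t := by
    intro t ht
    have hphiv : HasDerivAt (fun u => phi (v u)) (-(v t) * phi (v t) * w1 t) t :=
      (phi_hasDerivAt (v t)).comp t (hv_deriv t ht)
    have hne : -phi (v t) ≠ 0 := by have := phi_pos (v t); intro hcon; linarith [neg_eq_zero.1 hcon]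
    have h2 := (hphiv.neg.inv hne).mul_const (ε₁ - ε₂)
    have h3 : HasDerivAt w1 (-(-(-v t * phi (v t) * w1 t)) / (-phi (v t)) ^ 2 * (ε₁ - ε₂)) t := h2
    convert h3 using 1
    have hphine : phi (v t) ≠ 0 := (phi_pos (v t)).ne'
    rw [hw1_def]
    field_simp
  -- good open set where everything is differentiable
  set O : Set ℝ := S ∩ {u | 0 < 1 - C * v u} with hO_def
  have hO_open : IsOpen O := by
    rw [isOpen_iff_mem_nhds]
    rintro t ⟨htS, htD⟩
    have h1 : S ∈ nhds t := hS_open.mem_nhds htS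
    have hvc : ContinuousAt v t := (hv_deriv t htS).continuousAt
    have h2 : ContinuousAt (fun u => 1 - C * v u) t := (continuousAt_const.mul hvc).const_sub 1
    have h3 : {u | 0 < 1 - C * v u} ∈ nhds t := h2 (Ioi_mem_nhds htD)
    exact Filter.inter_mem h1 h3
  have hIccO : Set.Icc (0:ℝ) 1 ⊆ O := by
    intro t ht
    exact ⟨hIccS ht, (hkey (v t) (hv_mem t ht)).1⟩
  -- the function along the segment
  set Nt : ℝ → ℝ := fun t => t * N₁ + (1 - t) * N₂ with hNt_def
  have hNt_deriv : ∀ t : ℝ, HasDerivAt Nt (N₁ - N₂) t := by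
    intro t
    have h1 := ((hasDerivAt_id t).mul_const N₁).add
      (((hasDerivAt_const t (1:ℝ)).sub (hasDerivAt_id t)).mul_const N₂)
    refine h1.congr_deriv ?_
    ring
  have hNt_nonneg : ∀ t ∈ Set.Icc (0:ℝ) 1, 0 ≤ Nt t := by
    rintro t ⟨ht0, ht1⟩
    have := mul_nonneg ht0 hN₁
    have := mul_nonneg (by linarith : (0:ℝ) ≤ 1 - t) hN₂
    rw [hNt_def]; dsimp only; linarith
  set g : ℝ → ℝ := fun u => (A * Nt u + B * v u) / (1 - C * v u) with hg_def
  set F : ℝ → ℝ := fun u => Real.exp (g u) - 1 with hF_def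
  set g1 : ℝ → ℝ := fun u =>
    ((A * (N₁ - N₂) + B * w1 u) * (1 - C * v u) -
      (A * Nt u + B * v u) * -(C * w1 u)) / (1 - C * v u) ^ 2 with hg1_def
  set F1 : ℝ → ℝ := fun u => Real.exp (g u) * g1 u with hF1_def
  have hg_deriv : ∀ t ∈ O, HasDerivAt g (g1 t) t := by
    rintro t ⟨htS, htD⟩
    have hMt : HasDerivAt (fun u => A * Nt u + B * v u) (A * (N₁ - N₂) + B * w1 t) t :=
      ((hNt_deriv t).const_mul A).add ((hv_deriv t htS).const_mul B)
    have hDt : HasDerivAt (fun u => 1 - C * v u) (-(C * w1 t)) t :=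
      ((hv_deriv t htS).const_mul C).const_sub 1
    exact hMt.div hDt (ne_of_gt htD)
  have hF_deriv : ∀ t ∈ O, HasDerivAt F (F1 t) t := fun t ht =>
    ((hg_deriv t ht).exp).sub_const 1
  -- second derivative, canonical form, nonnegative
  have hF1_pack : ∀ t, t ∈ O → t ∈ Set.Icc (0:ℝ) 1 → ∃ d, HasDerivAt F1 d t ∧ 0 ≤ d := by
    rintro t ⟨htS, htD⟩ htI
    have hvt := hv_deriv t htS
    have hw1t := hw1_deriv t htS
    have hMt : HasDerivAt (fun u => A * Nt u + B * v u) (A * (N₁ - N₂) + B * w1 t) t :=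
      ((hNt_deriv t).const_mul A).add (hvt.const_mul B)
    have hDt : HasDerivAt (fun u => 1 - C * v u) (-(C * w1 t)) t :=
      (hvt.const_mul C).const_sub 1
    have hDne : (1 - C * v t) ≠ 0 := ne_of_gt htD
    have hgt : HasDerivAt g (g1 t) t := hg_deriv t ⟨htS, htD⟩
    have hNum : HasDerivAt (fun u =>
        (A * (N₁ - N₂) + B * w1 u) * (1 - C * v u) - (A * Nt u + B * v u) * -(C * w1 u))
        ((B * (v t * w1 t ^ 2)) * (1 - C * v t) + (A * (N₁ - N₂) + B * w1 t) * -(C * w1 t)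
          - ((A * (N₁ - N₂) + B * w1 t) * -(C * w1 t)
             + (A * Nt t + B * v t) * -(C * (v t * w1 t ^ 2)))) t :=
      (((hw1t.const_mul B).const_add (A * (N₁ - N₂))).mul hDt).sub
        (hMt.mul ((hw1t.const_mul C).neg))
    have hDen2 : HasDerivAt (fun u => (1 - C * v u) ^ 2)
        ((2:ℕ) * (1 - C * v t) ^ (2 - 1) * -(C * w1 t)) t := hDt.pow 2
    have hg1t := hNum.div hDen2 (pow_ne_zero 2 hDne)
    have hF1t := ((hgt).exp).mul hg1t
    -- convert the derivative to the canonical SOS form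
    set P : ℝ := B + A * C * Nt t with hP_def
    set DD : ℝ := 1 - C * v t with hDD_def
    have hcanon : HasDerivAt F1 (Real.exp (g t) *
        (((A * (N₁ - N₂) * DD + w1 t * (C * DD + P)) ^ 2
          + w1 t ^ 2 * DD ^ 2 * (v t * P - C ^ 2)) / DD ^ 4)) t := by
      refine hF1t.congr_deriv ?_
      rw [hg1_def]
      dsimp only
      simp only [Pi.div_apply]
      rw [hP_def, hDD_def]
      have hDne' : 1 - C * v t ≠ 0 := ne_of_gt htD
      field_simp [hDne']
      ring
    refine ⟨_, hcanon, ?_⟩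
    have hvmem := hv_mem t htI
    have hv0 : 0 ≤ v t := le_trans hqa.le hvmem.1
    have hvB : C ^ 2 ≤ v t * B := (hkey (v t) hvmem).2
    have hn : 0 ≤ Nt t := hNt_nonneg t htI
    have hsos := sos_key A B C (N₁ - N₂) (Nt t) (v t) (w1 t) htD hn hv0 hvB hA.le hC.le
    rw [hP_def, hDD_def]
    refine mul_nonneg (Real.exp_pos _).le (div_nonneg hsos (by positivity))
  -- convexity of F on [0,1]
  have hIccInt : interior (Set.Icc (0:ℝ) 1) = Set.Ioo 0 1 := interior_Icc
  have hconv : ConvexOn ℝ (Set.Icc (0:ℝ) 1) F := by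
    apply convexOn_of_deriv2_nonneg (convex_Icc 0 1)
    · intro t ht
      exact ((hF_deriv t (hIccO ht)).continuousAt).continuousWithinAt
    · intro t ht
      rw [hIccInt] at ht
      exact ((hF_deriv t (hIccO (Set.Ioo_subset_Icc_self ht))).differentiableAt).differentiableWithinAt
    · intro t ht
      rw [hIccInt] at ht
      have htO := hIccO (Set.Ioo_subset_Icc_self ht)
      have hev : deriv F =ᶠ[nhds t] F1 :=
        Filter.eventuallyEq_of_mem (hO_open.mem_nhds htO) (fun u hu => (hF_deriv u hu).deriv)
      obtain ⟨d, hd, -⟩ := hF1_pack t htO (Set.Ioo_subset_Icc_self ht)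
      exact (hd.differentiableAt.congr_of_eventuallyEq hev).differentiableWithinAt
    · intro t ht
      rw [hIccInt] at ht
      have htO := hIccO (Set.Ioo_subset_Icc_self ht)
      have hev : deriv F =ᶠ[nhds t] F1 :=
        Filter.eventuallyEq_of_mem (hO_open.mem_nhds htO) (fun u hu => (hF_deriv u hu).deriv)
      obtain ⟨d, hd, hd0⟩ := hF1_pack t htO (Set.Ioo_subset_Icc_self ht)
      have hDD : deriv (deriv F) t = d := by rw [hev.deriv_eq, hd.deriv]
      have hit : deriv^[2] F t = deriv (deriv F) t := by
        rw [Function.iterate_succ_apply', Function.iterate_one]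
      rw [hit, hDD]
      exact hd0
  -- endpoint identifications
  have hv1 : v 1 = q₁ := by
    show Vfun (e 1) = q₁
    have : e 1 = Qfun q₁ := by
      show (1:ℝ) * ε₁ + (1 - 1) * ε₂ = Qfun q₁
      rw [hε₁_def]; ring
    rw [this, Vfun_left]
  have hv0' : v 0 = q₂ := by
    show Vfun (e 0) = q₂
    have : e 0 = Qfun q₂ := by
      show (0:ℝ) * ε₁ + (1 - 0) * ε₂ = Qfun q₂
      rw [hε₂_def]; ring
    rw [this, Vfun_left]
  have hvlam : v lam = q := by
    show Vfun (e lam) = q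
    have : e lam = Qfun q := by
      show lam * ε₁ + (1 - lam) * ε₂ = Qfun q
      rw [hε₁_def, hε₂_def, hQ]
    rw [this, Vfun_left]
  have hPhi : ∀ N x : ℝ, Phi m γ' N x = Real.exp ((A * N + B * x) / (1 - C * x)) - 1 := by
    intro N x
    have harg : N * Real.log 2 / m + mu γ' * x / Real.sqrt m = A * N + B * x := by
      rw [hA_def, hB_def, hsqm_def]; ring
    have hden : 1 - rho γ' * x / Real.sqrt m = 1 - C * x := by
      rw [hC_def, hsqm_def]; ring
    unfold Phi
    rw [harg, hden]
  have hNt1 : Nt 1 = N₁ := by show (1:ℝ) * N₁ + (1 - 1) * N₂ = N₁; ring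
  have hNt0 : Nt 0 = N₂ := by show (0:ℝ) * N₁ + (1 - 0) * N₂ = N₂; ring
  have hF1v : F 1 = Phi m γ' N₁ q₁ := by
    rw [hPhi]
    show Real.exp ((A * Nt 1 + B * v 1) / (1 - C * v 1)) - 1 = _
    rw [hNt1, hv1]
  have hF0v : F 0 = Phi m γ' N₂ q₂ := by
    rw [hPhi]
    show Real.exp ((A * Nt 0 + B * v 0) / (1 - C * v 0)) - 1 = _
    rw [hNt0, hv0']
  have hFlamv : F lam = Phi m γ' (lam * N₁ + (1 - lam) * N₂) q := by
    rw [hPhi]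
    show Real.exp ((A * Nt lam + B * v lam) / (1 - C * v lam)) - 1 = _
    rw [hvlam]
  have hcomb := hconv.2 (Set.mem_Icc.mpr ⟨zero_le_one, le_refl (1:ℝ)⟩)
    (Set.mem_Icc.mpr ⟨le_refl (0:ℝ), zero_le_one⟩)
    hlam₀ (by linarith : (0:ℝ) ≤ 1 - lam) (by ring : lam + (1 - lam) = 1)
  simp only [smul_eq_mul] at hcomb
  have hsm : lam * (1:ℝ) + (1 - lam) * (0:ℝ) = lam := by ring
  rw [hsm, hFlamv, hF1v, hF0v] at hcomb
  exact hcomb
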